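/- arXiv:0707.1753 — 3 statements merged into one kernel-verified Lean document; each statement's English description precedes it below -/
import Mathlib

section
/- Let R be a DVR with residue field F = R/℘, M a finite free R-module with bilinear form, M(i) the ℘^i-filtration submodules, and define the Jantzen layers J_i = (M(i)+℘M)/(M(i+1)+℘M) over F. If M admits dual bases with ⟨f_S, g_T⟩ = δ_{ST} d_T (d_T ≠ 0), then dim_F J_i = #{T : ν_℘(d_T) = i}, and consequently Σ_{i≥0} i · dim_F J_i = ν_℘(det(Gram matrix of M)). -/
open IsLocalRing

/-- `HasMultiplicity A M L n` : the `A`-module `M` has a composition series in which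
exactly `n` factors are isomorphic to `L` (i.e. the composition multiplicity
`[M : L]` equals `n`). -/
def HasMultiplicity (A : Type*) [Ring A] (M : Type*) [AddCommGroup M] [Module A M]
    (L : Type*) [AddCommGroup L] [Module A L] (n : ℕ) : Prop :=
  ∃ (m : ℕ) (c : ℕ → Submodule A M),
    c 0 = ⊥ ∧ c m = ⊤ ∧ (∀ j < m, c j ≤ c (j + 1)) ∧
    (∀ j < m, IsSimpleModule A
      (↥(c (j + 1)) ⧸ Submodule.comap (c (j + 1)).subtype (c j))) ∧
    n = Nat.card {j : Fin m //
      Nonempty ((↥(c (j.1 + 1)) ⧸ Submodule.comap (c (j.1 + 1)).subtype (c j.1)) ≃ₗ[A] L)}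

section congr
variable {A : Type*} [Ring A] {M M' L : Type*} [AddCommGroup M] [Module A M]
  [AddCommGroup M'] [Module A M'] [AddCommGroup L] [Module A L]

noncomputable def factorEquiv (e : M ≃ₗ[A] M') (p q : Submodule A M) :
    (↥p ⧸ Submodule.comap p.subtype q) ≃ₗ[A]
      (↥(Submodule.map (e : M →ₗ[A] M') p) ⧸
        Submodule.comap (Submodule.map (e : M →ₗ[A] M') p).subtype
          (Submodule.map (e : M →ₗ[A] M') q)) := by
  refine Submodule.Quotient.equiv _ _ (e.submoduleMap p) ?_
  ext x
  simp only [Submodule.mem_map, Submodule.mem_comap, Submodule.subtype_apply]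
  constructor
  · rintro ⟨y, hy, rfl⟩
    exact ⟨y.1, hy, by simp⟩
  · rintro ⟨z, hz, hzx⟩
    refine ⟨(e.submoduleMap p).symm x, ?_, by simp⟩
    have h1 : (((e.submoduleMap p).symm x : p) : M) = e.symm x := by simp
    rw [h1, ← hzx]
    simpa using hz

theorem hasMultiplicity_congr (e : M ≃ₗ[A] M') {n : ℕ}
    (h : HasMultiplicity A M L n) : HasMultiplicity A M' L n := by
  obtain ⟨m, c, h0, htop, hmono, hsimp, hcount⟩ := h
  refine ⟨m, fun j => Submodule.map (e : M →ₗ[A] M') (c j), by simp [h0], ?_,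
    fun j hj => Submodule.map_mono (hmono j hj),
    fun j hj => (hsimp j hj).congr (factorEquiv e _ _).symm, ?_⟩
  · show Submodule.map (e : M →ₗ[A] M') (c m) = ⊤
    rw [htop, Submodule.map_top, LinearMap.range_eq_top]
    exact e.surjective
  · rw [hcount]
    refine Nat.card_congr (Equiv.subtypeEquiv (Equiv.refl _) fun j => ?_)
    constructor
    · rintro ⟨E⟩; exact ⟨(factorEquiv e (c (j.1+1)) (c j.1)).symm.trans E⟩
    · rintro ⟨E⟩; exact ⟨(factorEquiv e (c (j.1+1)) (c j.1)).trans E⟩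
end congr

section pi
variable {A : Type*} [Ring A] {L : Type*} [AddCommGroup L] [Module A L]

def zeroFrom (A : Type*) [Ring A] (L : Type*) [AddCommGroup L] [Module A L] (n j : ℕ) :
    Submodule A (Fin n → L) where
  carrier := {v | ∀ k : Fin n, j ≤ (k : ℕ) → v k = 0}
  add_mem' := fun ha hb k hk => by simp [ha k hk, hb k hk]
  zero_mem' := fun k _ => rfl
  smul_mem' := fun a v hv k hk => by simp [hv k hk]

theorem mem_zeroFrom {n j : ℕ} {v : Fin n → L} :
    v ∈ zeroFrom A L n j ↔ ∀ k : Fin n, j ≤ (k : ℕ) → v k = 0 := Iff.rfl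

noncomputable def zeroFromFactorEquiv (n j : ℕ) (hj : j < n) :
    (↥(zeroFrom A L n (j + 1)) ⧸
      Submodule.comap (zeroFrom A L n (j + 1)).subtype (zeroFrom A L n j)) ≃ₗ[A] L := by
  let φ : ↥(zeroFrom A L n (j + 1)) →ₗ[A] L :=
    (LinearMap.proj (⟨j, hj⟩ : Fin n)).comp (zeroFrom A L n (j + 1)).subtype
  have hsurj : Function.Surjective φ := by
    intro a
    refine ⟨⟨Pi.single (⟨j, hj⟩ : Fin n) a, fun k hk => ?_⟩, ?_⟩
    · apply Pi.single_eq_of_ne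
      intro h; rw [h] at hk; simp at hk
    · simp [φ]
  have hker : LinearMap.ker φ =
      Submodule.comap (zeroFrom A L n (j + 1)).subtype (zeroFrom A L n j) := by
    ext ⟨v, hv⟩
    simp only [LinearMap.mem_ker, Submodule.mem_comap, Submodule.subtype_apply, mem_zeroFrom]
    constructor
    · intro h0 k hk
      rcases eq_or_lt_of_le hk with h | h
      · have : k = (⟨j, hj⟩ : Fin n) := by exact Fin.ext h.symm
        rw [this]; simpa [φ] using h0
      · exact hv k h
    · intro h
      simpa [φ] using h (⟨j, hj⟩ : Fin n) le_rfl
  exact (Submodule.quotEquivOfEq _ _ hker.symm).trans (φ.quotKerEquivOfSurjective hsurj)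

theorem hasMultiplicity_pi [IsSimpleModule A L] (n : ℕ) : HasMultiplicity A (Fin n → L) L n := by
  refine ⟨n, zeroFrom A L n, ?_, ?_, fun j _ v hv k hk => hv k (by omega), ?_, ?_⟩
  · ext v; simp only [mem_zeroFrom, Submodule.mem_bot]
    constructor
    · intro h; funext k; exact h k (Nat.zero_le _)
    · rintro rfl k _; rfl
  · ext v; simp only [mem_zeroFrom, Submodule.mem_top, iff_true]
    intro k hk; exact absurd hk (by omega)
  · exact fun j hj => IsSimpleModule.congr (zeroFromFactorEquiv n j hj)
  · rw [Nat.card_congr (Equiv.subtypeUnivEquiv fun j => ⟨zeroFromFactorEquiv n j.1 j.isLt⟩)]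
    simp
end pi

/-- Let `R` be a DVR with maximal ideal `℘` and residue field `F = R/℘`, and let `M`
be a finite free `R`-module with a bilinear form admitting dual bases with
`⟨f_S, g_T⟩ = δ_{ST} d_T`, `d_T ≠ 0`.  The Jantzen layer
`J_i = (M(i)+℘M)/(M(i+1)+℘M)` has `F`-dimension (equivalently, `R`-length, i.e. the
multiplicity of the residue field `F` as a composition factor) equal to
`#{T : ν(d_T) = i}`; consequently `Σ_i i · dim_F J_i` equals the valuation of the
determinant of the Gram matrix. -/
theorem jantzen_layer_dimension
    (R : Type*) [CommRing R] [IsDomain R] [IsDiscreteValuationRing R]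
    (M : Type*) [AddCommGroup M] [Module R M] [Module.Finite R M] [Module.Free R M]
    (I : Type*) [Fintype I] [DecidableEq I]
    (f g : Module.Basis I R M)
    (B : M →ₗ[R] M →ₗ[R] R)
    (d : I → R) (hd : ∀ T, d T ≠ 0)
    (hfg : ∀ S T : I, B (f S) (g T) = if S = T then d T else 0)
    (ν : I → ℕ)
    (hν : ∀ T : I, d T ∈ (maximalIdeal R) ^ (ν T) ∧ d T ∉ (maximalIdeal R) ^ (ν T + 1))
    (N : ℕ → Submodule R M)
    (hN : ∀ (i : ℕ) (x : M), x ∈ N i ↔ ∀ y : M, B x y ∈ (maximalIdeal R) ^ i)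
    (νdet : ℕ)
    (hdet : (Matrix.of fun S T : I => B (f S) (g T)).det ∈ (maximalIdeal R) ^ νdet ∧
            (Matrix.of fun S T : I => B (f S) (g T)).det ∉ (maximalIdeal R) ^ (νdet + 1)) :
    (∀ i : ℕ,
      HasMultiplicity R
        (↥(N i ⊔ (maximalIdeal R) • (⊤ : Submodule R M)) ⧸
          Submodule.comap (N i ⊔ (maximalIdeal R) • (⊤ : Submodule R M)).subtype
            (N (i + 1) ⊔ (maximalIdeal R) • (⊤ : Submodule R M)))
        (R ⧸ maximalIdeal R)
        (Nat.card {T : I // ν T = i})) ∧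
    (∀ m : ℕ, (∀ T : I, ν T < m) →
      ∑ i ∈ Finset.range m, i * Nat.card {T : I // ν T = i} = νdet) := by
  set ℘ := maximalIdeal R with h℘
  -- the bilinear form in coordinates
  have h1 : ∀ (x : M) (T : I), B x (g T) = f.repr x T * d T := by
    intro x T
    conv_lhs => rw [← f.sum_repr x]
    rw [map_sum, LinearMap.sum_apply]
    simp only [map_smul, LinearMap.smul_apply, hfg, smul_eq_mul, mul_ite, mul_zero]
    rw [Finset.sum_ite_eq' Finset.univ T (fun S => f.repr x S * d T), if_pos (Finset.mem_univ T)]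
  have h2 : ∀ (T : I) (y : M), B (f T) y = g.repr y T * d T := by
    intro T y
    conv_lhs => rw [← g.sum_repr y]
    rw [map_sum]
    simp only [map_smul, smul_eq_mul, hfg, mul_ite, mul_zero]
    have : ∀ S : I, (if T = S then g.repr y S * d S else 0)
        = if S = T then g.repr y S * d S else 0 := by
      intro S
      by_cases h : S = T
      · simp [h]
      · rw [if_neg h, if_neg (Ne.symm h)]
    rw [Finset.sum_congr rfl fun S _ => this S,
      Finset.sum_ite_eq' Finset.univ T (fun S => g.repr y S * d S), if_pos (Finset.mem_univ T)]
  -- the coordinate description of N i ⊔ ℘M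
  let W : ℕ → Submodule R M := fun i =>
    { carrier := {x | ∀ T : I, ν T < i → f.repr x T ∈ ℘}
      add_mem' := fun ha hb T hT => by
        rw [map_add, Finsupp.add_apply]; exact Ideal.add_mem _ (ha T hT) (hb T hT)
      zero_mem' := fun T _ => by simp
      smul_mem' := fun a x hx T hT => by
        rw [map_smul, Finsupp.smul_apply, smul_eq_mul]
        exact Ideal.mul_mem_left _ _ (hx T hT) }
  have memW : ∀ (i : ℕ) (x : M), x ∈ W i ↔ ∀ T : I, ν T < i → f.repr x T ∈ ℘ :=
    fun i x => Iff.rfl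
  have hW : ∀ i : ℕ, N i ⊔ ℘ • (⊤ : Submodule R M) = W i := by
    intro i
    apply le_antisymm
    · apply sup_le
      · intro x hx T hT
        by_contra hmem
        have hu : IsUnit (f.repr x T) := by
          by_contra hu
          exact hmem (h℘ ▸ hu)
        obtain ⟨u, hu⟩ := hu
        have hBx : f.repr x T * d T ∈ ℘ ^ i := h1 x T ▸ (hN i x).mp hx (g T)
        have hpow : (℘ : Ideal R) ^ i ≤ ℘ ^ (ν T + 1) := Ideal.pow_le_pow_right hT
        have : d T = ↑u⁻¹ * (f.repr x T * d T) := by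
          rw [← mul_assoc, ← hu, Units.inv_mul, one_mul]
        exact (hν T).2 (this ▸ Ideal.mul_mem_left _ _ (hpow hBx))
      · rw [Submodule.smul_le]
        intro a ha m _ T hT
        rw [map_smul, Finsupp.smul_apply, smul_eq_mul]
        exact Ideal.mul_mem_right _ _ ha
    · intro x hx
      rw [Submodule.mem_sup]
      refine ⟨∑ T ∈ Finset.univ.filter (fun T => i ≤ ν T), f.repr x T • f T, ?_,
        ∑ T ∈ Finset.univ.filter (fun T => ¬ i ≤ ν T), f.repr x T • f T, ?_, ?_⟩
      · apply Submodule.sum_mem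
        intro T hT
        rw [Finset.mem_filter] at hT
        apply Submodule.smul_mem
        rw [hN]
        intro y
        rw [h2]
        exact Ideal.mul_mem_left _ _ (Ideal.pow_le_pow_right hT.2 (hν T).1)
      · apply Submodule.sum_mem
        intro T hT
        rw [Finset.mem_filter] at hT
        exact Submodule.smul_mem_smul (hx T (by omega)) trivial
      · rw [Finset.sum_filter_add_sum_filter_not]
        exact f.sum_repr x
  have hsimpleF : IsSimpleModule R (R ⧸ ℘) :=
    isSimpleModule_iff_isCoatom.mpr (IsLocalRing.maximalIdeal.isMaximal R).out
  constructor
  · intro i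
    rw [hW i, hW (i + 1)]
    -- quotient equiv with functions to the residue field
    classical
    set n := Nat.card {T : I // ν T = i} with hn
    let φ : ↥(W i) →ₗ[R] ({T : I // ν T = i} → R ⧸ ℘) :=
      LinearMap.pi fun T =>
        ℘.mkQ ∘ₗ (Finsupp.lapply T.1) ∘ₗ (f.repr.toLinearMap.comp (W i).subtype)
    have hφ : ∀ (x : ↥(W i)) (T : {T : I // ν T = i}),
        φ x T = Submodule.Quotient.mk (f.repr x.1 T.1) := fun x T => rfl
    have hsurj : Function.Surjective φ := by
      intro v
      choose a ha using fun T : {T : I // ν T = i} =>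
        Submodule.Quotient.mk_surjective ℘ (v T)
      have hrepr : ∀ S : I, f.repr (∑ T : {T : I // ν T = i}, a T • f T.1) S =
          ∑ T : {T : I // ν T = i}, if T.1 = S then a T else 0 := by
        intro S
        rw [map_sum, Finsupp.finset_sum_apply]
        refine Finset.sum_congr rfl fun T _ => ?_
        rw [map_smul, Finsupp.smul_apply, Module.Basis.repr_self, smul_eq_mul,
          Finsupp.single_apply, mul_ite, mul_one, mul_zero]
      refine ⟨⟨∑ T : {T : I // ν T = i}, a T • f T.1, ?_⟩, ?_⟩
      · intro S hS
        rw [hrepr]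
        rw [Finset.sum_eq_zero]
        · exact Ideal.zero_mem _
        · intro T _
          rw [if_neg]
          intro h
          rw [← h] at hS
          have := T.2
          omega
      · funext T
        rw [hφ]
        have : f.repr (∑ T' : {T : I // ν T = i}, a T' • f T'.1) T.1 = a T := by
          rw [hrepr, Finset.sum_eq_single T]
          · simp
          · intro T' _ hT'
            exact if_neg fun h => hT' (Subtype.ext h)
          · intro h; exact absurd (Finset.mem_univ T) h
        rw [this]
        exact ha T
    have hker : LinearMap.ker φ = Submodule.comap (W i).subtype (W (i + 1)) := by
      ext x
      simp only [LinearMap.mem_ker, Submodule.mem_comap, Submodule.subtype_apply, memW]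
      constructor
      · intro h0 T hT
        rcases Nat.lt_or_ge (ν T) i with h | h
        · exact x.2 T h
        · have hTi : ν T = i := by omega
          have := congrFun h0 ⟨T, hTi⟩
          rw [hφ] at this
          exact (Submodule.Quotient.mk_eq_zero _).mp this
      · intro h
        funext T
        rw [hφ]
        exact (Submodule.Quotient.mk_eq_zero _).mpr (h T.1 (by omega))
    have E : (↥(W i) ⧸ Submodule.comap (W i).subtype (W (i + 1))) ≃ₗ[R]
        ({T : I // ν T = i} → R ⧸ ℘) :=
      (Submodule.quotEquivOfEq _ _ hker.symm).trans (φ.quotKerEquivOfSurjective hsurj)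
    have eqv : {T : I // ν T = i} ≃ Fin n := by
      apply Fintype.equivFinOfCardEq
      rw [hn, Nat.card_eq_fintype_card]
    exact hasMultiplicity_congr ((LinearEquiv.funCongrLeft R (R ⧸ ℘) eqv).trans E.symm)
      (hasMultiplicity_pi n)
  · intro m hm
    -- determinant is the product of the d T
    have hdetval : (Matrix.of fun S T : I => B (f S) (g T)).det = ∏ T : I, d T := by
      have : (Matrix.of fun S T : I => B (f S) (g T)) = Matrix.diagonal d := by
        ext S T
        rw [Matrix.of_apply, hfg, Matrix.diagonal_apply]
        by_cases h : S = T
        · subst h; simp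
        · simp [h]
      rw [this, Matrix.det_diagonal]
    -- uniformizer
    obtain ⟨π, hπ⟩ := IsDiscreteValuationRing.exists_irreducible R
    have hspan : ℘ = Ideal.span {π} := hπ.maximalIdeal_eq
    have hmem_iff : ∀ (k : ℕ) (x : R), x ∈ ℘ ^ k ↔ π ^ k ∣ x := by
      intro k x
      rw [hspan, Ideal.span_singleton_pow, Ideal.mem_span_singleton]
    have hprime : Prime π := hπ.prime
    -- d T = π ^ ν T * c T with π not dividing c T
    choose c hc using fun T => (hmem_iff (ν T) (d T)).mp (hν T).1
    have hcnd : ∀ T, ¬ π ∣ c T := by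
      intro T hdvd
      apply (hν T).2
      rw [hmem_iff, pow_succ, hc T]
      exact mul_dvd_mul_left _ hdvd
    have hprod : ∏ T : I, d T = π ^ (∑ T : I, ν T) * ∏ T : I, c T := by
      rw [Finset.prod_congr rfl (fun T _ => hc T), Finset.prod_mul_distrib,
        Finset.prod_pow_eq_pow_sum]
    have hSme : (∏ T : I, d T) ∈ ℘ ^ (∑ T : I, ν T) := by
      rw [hmem_iff, hprod]; exact Dvd.intro _ rfl
    have hSno : (∏ T : I, d T) ∉ ℘ ^ ((∑ T : I, ν T) + 1) := by
      rw [hmem_iff, hprod, pow_succ]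
      intro hdvd
      rw [mul_dvd_mul_iff_left (pow_ne_zero _ hprime.ne_zero)] at hdvd
      obtain ⟨T, _, hT⟩ := hprime.exists_mem_finset_dvd hdvd
      exact hcnd T hT
    -- νdet = ∑ ν T
    have hdet1 : (∏ T : I, d T) ∈ ℘ ^ νdet := hdetval ▸ hdet.1
    have hdet2 : (∏ T : I, d T) ∉ ℘ ^ (νdet + 1) := hdetval ▸ hdet.2
    have hνdet : νdet = ∑ T : I, ν T := by
      rcases lt_trichotomy νdet (∑ T : I, ν T) with h | h | h
      · exact absurd (Ideal.pow_le_pow_right (by omega : νdet + 1 ≤ ∑ T : I, ν T) hSme) hdet2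
      · exact h
      · exact absurd (Ideal.pow_le_pow_right
          (by omega : (∑ T : I, ν T) + 1 ≤ νdet) hdet1) hSno
    rw [hνdet]
    -- counting
    have hcard : ∀ i : ℕ, Nat.card {T : I // ν T = i} =
        (Finset.univ.filter (fun T => ν T = i)).card := by
      intro i
      rw [Nat.card_eq_fintype_card, Fintype.card_subtype]
    calc ∑ i ∈ Finset.range m, i * Nat.card {T : I // ν T = i}
        = ∑ i ∈ Finset.range m, ∑ T ∈ Finset.univ.filter (fun T => ν T = i), ν T := by
          refine Finset.sum_congr rfl fun i _ => ?_
          rw [hcard, Finset.sum_congr rfl (fun T hT => (Finset.mem_filter.mp hT).2),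
            Finset.sum_const, smul_eq_mul, mul_comm]
      _ = ∑ T : I, ν T := by
          exact Finset.sum_fiberwise_of_maps_to (fun T _ => Finset.mem_range.mpr (hm T)) ν
end

section
/- Let R be a DVR with residue field F, M a finite free R-module with bilinear form, and M(i) its ℘^i-filtration. The induced images M̄(i) = (M(i) + ℘M)/℘M in M̄ = M/℘M form a decreasing filtration of F-vector spaces with M̄(1) = rad(⟨·,·⟩ mod ℘), i.e., the first Jantzen layer M̄(0)/M̄(1) is the quotient of M̄ by the radical of the reduced bilinear form. -/
open IsLocalRing

/-- Let `R` be a DVR with maximal ideal `℘` and residue field `F = R/℘`, and `M` a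
finite free `R`-module with a bilinear form, with `℘^i`-filtration `M(i)`.  The
images `M̄(i) = (M(i) + ℘M)/℘M` in `M̄ = M/℘M` form a decreasing filtration with
`M̄(0) = M̄` and `M̄(1)` equal to the radical of the reduced bilinear form; i.e. the
first Jantzen layer `M̄(0)/M̄(1)` is the quotient of `M̄` by the radical of the
reduced form. -/
theorem jantzen_first_layer
    (R : Type*) [CommRing R] [IsDomain R] [IsDiscreteValuationRing R]
    (M : Type*) [AddCommGroup M] [Module R M] [Module.Finite R M] [Module.Free R M]
    (B : M →ₗ[R] M →ₗ[R] R)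
    (MI : ℕ → Submodule R M)
    (hMI : ∀ (i : ℕ) (x : M), x ∈ MI i ↔ ∀ y : M, B x y ∈ (maximalIdeal R) ^ i)
    (Bbar : (M ⧸ ((maximalIdeal R) • (⊤ : Submodule R M))) →ₗ[R]
      (M ⧸ ((maximalIdeal R) • (⊤ : Submodule R M))) →ₗ[R] (R ⧸ maximalIdeal R))
    (hBbar : ∀ x y : M,
      Bbar (Submodule.Quotient.mk x) (Submodule.Quotient.mk y) =
        Ideal.Quotient.mk (maximalIdeal R) (B x y)) :
    (∀ i : ℕ,
      (MI (i + 1) ⊔ (maximalIdeal R) • (⊤ : Submodule R M)).map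
          ((maximalIdeal R) • (⊤ : Submodule R M)).mkQ ≤
        (MI i ⊔ (maximalIdeal R) • (⊤ : Submodule R M)).map
          ((maximalIdeal R) • (⊤ : Submodule R M)).mkQ) ∧
    ((MI 0 ⊔ (maximalIdeal R) • (⊤ : Submodule R M)).map
        ((maximalIdeal R) • (⊤ : Submodule R M)).mkQ = ⊤) ∧
    (((MI 1 ⊔ (maximalIdeal R) • (⊤ : Submodule R M)).map
        ((maximalIdeal R) • (⊤ : Submodule R M)).mkQ : Set _) =
      {x : M ⧸ ((maximalIdeal R) • (⊤ : Submodule R M)) | ∀ y, Bbar x y = 0}) := by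
  have key : ∀ x : M, x ∈ (maximalIdeal R) • (⊤ : Submodule R M) →
      ∀ y : M, B x y ∈ maximalIdeal R := by
    intro x hx y
    refine Submodule.smul_induction_on hx ?_ ?_
    · intro r hr m _
      rw [map_smul]
      exact Ideal.mul_mem_right _ _ hr
    · intro a b ha hb
      rw [map_add]
      exact add_mem ha hb
  refine ⟨?_, ?_, ?_⟩
  · intro i
    apply Submodule.map_mono
    apply sup_le_sup_right
    intro x hx
    rw [hMI] at hx ⊢
    intro y
    exact Ideal.pow_le_pow_right (Nat.le_succ i) (hx y)
  · rw [eq_top_iff]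
    intro z _
    obtain ⟨x, rfl⟩ := Submodule.mkQ_surjective _ z
    exact ⟨x, Submodule.mem_sup_left ((hMI 0 x).2 (fun y => by simp)), rfl⟩
  · ext z
    simp only [Set.mem_setOf_eq, SetLike.mem_coe, Submodule.mem_map]
    constructor
    · rintro ⟨x, hx, rfl⟩ ybar
      obtain ⟨y, rfl⟩ := Submodule.mkQ_surjective _ ybar
      obtain ⟨a, ha, b, hb, rfl⟩ := Submodule.mem_sup.1 hx
      have ha' : B a y ∈ maximalIdeal R := by
        have := (hMI 1 a).1 ha y
        rwa [pow_one] at this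
      have : Submodule.mkQ ((maximalIdeal R) • (⊤ : Submodule R M)) (a + b) = Submodule.Quotient.mk (a + b) := rfl
      have hy : ((maximalIdeal R) • (⊤ : Submodule R M)).mkQ y = Submodule.Quotient.mk y := rfl
      rw [this, hy, hBbar, Ideal.Quotient.eq_zero_iff_mem, map_add, LinearMap.add_apply]
      exact add_mem ha' (key b hb y)
    · intro hz
      obtain ⟨x, rfl⟩ := Submodule.mkQ_surjective _ z
      refine ⟨x, Submodule.mem_sup_left ?_, rfl⟩
      rw [hMI]
      intro y
      rw [pow_one, ← Ideal.Quotient.eq_zero_iff_mem, ← hBbar]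
      exact hz (Submodule.Quotient.mk y)
end

section
/- Let R be a DVR and M a finite free R-module with a bilinear form whose Gram matrix has nonzero determinant. Then the ℘^i-filtration M(i) satisfies M(i) ⊇ ℘^i M for all i, and there exists k such that M(i) ⊆ ℘ M(0)' for all i > k where the induced filtration on M/℘M stabilizes; in particular the Jantzen filtration of M/℘M is a finite chain reaching 0. -/
open IsLocalRing

/-- Let `R` be a DVR and `M` a finite free `R`-module with a bilinear form whose
Gram matrix has nonzero determinant.  Then the `℘^i`-filtration satisfies
`M(i) ⊇ ℘^i M` for all `i`, and there exists `k` such that `M(i) ⊆ ℘M` for all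
`i > k`; in particular the induced Jantzen filtration of `M/℘M` is a finite chain
reaching `0`. -/
theorem jantzen_filtration_finite
    (R : Type*) [CommRing R] [IsDomain R] [IsDiscreteValuationRing R]
    (M : Type*) [AddCommGroup M] [Module R M] [Module.Finite R M] [Module.Free R M]
    (I : Type*) [Fintype I] [DecidableEq I]
    (b : Module.Basis I R M)
    (B : M →ₗ[R] M →ₗ[R] R)
    (hdet : (Matrix.of fun S T : I => B (b S) (b T)).det ≠ 0)
    (MI : ℕ → Submodule R M)
    (hMI : ∀ (i : ℕ) (x : M), x ∈ MI i ↔ ∀ y : M, B x y ∈ (maximalIdeal R) ^ i) :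
    (∀ i : ℕ, ((maximalIdeal R) ^ i) • (⊤ : Submodule R M) ≤ MI i) ∧
    (∃ k : ℕ, ∀ i : ℕ, k < i → MI i ≤ (maximalIdeal R) • (⊤ : Submodule R M)) := by
  set G : Matrix I I R := Matrix.of fun S T : I => B (b S) (b T) with hG
  constructor
  · intro i x hx
    rw [hMI]
    intro y
    refine Submodule.smul_induction_on hx ?_ ?_
    · intro r hr m _
      simpa using Ideal.mul_mem_right _ _ hr
    · intro a c ha hc
      simpa using Ideal.add_mem _ ha hc
  · -- find k with G.det ∉ ℘^(k+1)
    have hbot : (⨅ n : ℕ, (maximalIdeal R) ^ n) = ⊥ :=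
      Ideal.iInf_pow_eq_bot_of_isLocalRing _ (Ideal.IsMaximal.ne_top (maximalIdeal.isMaximal R))
    have hk : ∃ k : ℕ, G.det ∉ (maximalIdeal R) ^ k := by
      by_contra h
      push_neg at h
      have : G.det ∈ (⨅ n : ℕ, (maximalIdeal R) ^ n) := by
        simp only [Submodule.mem_iInf]; exact h
      rw [hbot] at this
      exact hdet (by simpa using this)
    obtain ⟨k, hkd⟩ := hk
    refine ⟨k, fun i hi x hx => ?_⟩
    rw [hMI] at hx
    set c := b.repr x with hc
    -- key : for each T, B x (b T) = Matrix.vecMul c G T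
    have hBx : ∀ T : I, B x (b T) = Matrix.vecMul c G T := by
      intro T
      conv_lhs => rw [← b.sum_repr x]
      rw [map_sum, Matrix.vecMul, dotProduct]
      simp [hG, hc, mul_comm]
    have hdet_c : ∀ U : I, G.det * c U ∈ (maximalIdeal R) ^ i := by
      intro U
      have key : G.det * c U = ∑ T : I, (B x (b T)) * G.adjugate T U := by
        have : Matrix.vecMul (Matrix.vecMul c G) G.adjugate =
            Matrix.vecMul c (G.det • (1 : Matrix I I R)) := by
          rw [Matrix.vecMul_vecMul, Matrix.mul_adjugate]
        have h2 := congrFun this U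
        rw [Matrix.vecMul, dotProduct] at h2
        simp only [← hBx] at h2
        rw [h2]
        simp [Matrix.vecMul, dotProduct, Matrix.one_apply, mul_comm]
      rw [key]
      exact Ideal.sum_mem _ fun T _ => Ideal.mul_mem_right _ _ (hx (b T))
    -- each coordinate of x is in the maximal ideal
    have hcoord : ∀ U : I, c U ∈ maximalIdeal R := by
      intro U
      by_contra hU
      have hunit : IsUnit (c U) := by
        rwa [← IsLocalRing.notMem_maximalIdeal]
      obtain ⟨u, hu⟩ := hunit
      have : G.det ∈ (maximalIdeal R) ^ i := by
        have := Ideal.mul_mem_right (↑u⁻¹) _ (hdet_c U)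
        rwa [mul_assoc, ← hu, Units.mul_inv, mul_one] at this
      exact hkd (Ideal.pow_le_pow_right (Nat.le_of_lt hi) this)
    -- conclude x ∈ ℘ • ⊤
    have : x = ∑ U : I, c U • b U := (b.sum_repr x).symm
    rw [this]
    exact Submodule.sum_mem _ fun U _ =>
      Submodule.smul_mem_smul (hcoord U) (Submodule.mem_top)
end
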